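/- Let A and B be bounded linear operators (or n×n complex matrices). Then lim_{n→∞} (exp(A/n) · exp(B/n))^n = exp(A + B). (Lie–Trotter product formula.) -/

import Mathlib

set_option linter.unusedSectionVars false
open NormedSpace

section aux
variable {𝔸 : Type*} [NormedRing 𝔸] [NormedAlgebra ℂ 𝔸] [CompleteSpace 𝔸]

lemma aux_norm_pow_le (h1 : ‖(1 : 𝔸)‖ ≤ 1) (x : 𝔸) : ∀ m : ℕ, ‖x ^ m‖ ≤ ‖x‖ ^ m := by
  intro m
  induction m with
  | zero => simpa using h1
  | succ m ih =>
    rw [pow_succ, pow_succ]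
    exact (norm_mul_le _ _).trans (mul_le_mul_of_nonneg_right ih (norm_nonneg x))

lemma aux_norm_exp_le (h1 : ‖(1 : 𝔸)‖ ≤ 1) (x : 𝔸) : ‖exp x‖ ≤ Real.exp ‖x‖ := by
  rw [exp_eq_tsum ℂ, Real.exp_eq_exp_ℝ, exp_eq_tsum ℝ]
  refine (norm_tsum_le_tsum_norm (norm_expSeries_summable' (𝕂 := ℂ) x)).trans ?_
  refine Summable.tsum_le_tsum (fun n => ?_) (norm_expSeries_summable' (𝕂 := ℂ) x)
    (expSeries_summable' (𝕂 := ℝ) (‖x‖))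
  rw [norm_smul, norm_inv, Complex.norm_natCast, smul_eq_mul]
  exact mul_le_mul_of_nonneg_left (aux_norm_pow_le h1 x n) (by positivity)

lemma aux_norm_exp_sub_le (x : 𝔸) :
    ‖exp x - 1 - x‖ ≤ ‖x‖ ^ 2 * Real.exp ‖x‖ := by
  have hs := expSeries_summable' (𝕂 := ℂ) x
  have h2 : exp x - 1 - x = ∑' n : ℕ, (((n + 2).factorial : ℂ))⁻¹ • x ^ (n + 2) := by
    rw [show exp x = ∑' n : ℕ, ((n.factorial : ℂ))⁻¹ • x ^ n from by rw [exp_eq_tsum ℂ]]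
    rw [Summable.tsum_eq_zero_add hs, Summable.tsum_eq_zero_add ((summable_nat_add_iff 1).2 hs)]
    simp only [pow_zero, pow_one, Nat.factorial_zero, Nat.factorial_one, Nat.cast_one,
      inv_one, one_smul, show ∀ n : ℕ, n + 1 + 1 = n + 2 from fun n => rfl]
    simp only [zero_add, Nat.factorial_one, Nat.cast_one, inv_one, one_smul, pow_one]
    abel
  rw [h2]
  have hnorm : Summable fun n : ℕ => ‖(((n + 2).factorial : ℂ))⁻¹ • x ^ (n + 2)‖ :=
    (summable_nat_add_iff 2).2 (norm_expSeries_summable' (𝕂 := ℂ) x)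
  refine (norm_tsum_le_tsum_norm hnorm).trans ?_
  have hrhs : Summable fun n : ℕ => ‖x‖ ^ 2 * ((n.factorial : ℝ)⁻¹ * ‖x‖ ^ n) := by
    apply Summable.mul_left
    simpa [smul_eq_mul] using expSeries_summable' (𝕂 := ℝ) (‖x‖)
  refine (Summable.tsum_le_tsum (fun n => ?_) hnorm hrhs).trans ?_
  · rw [norm_smul, norm_inv, Complex.norm_natCast]
    calc ((n + 2).factorial : ℝ)⁻¹ * ‖x ^ (n + 2)‖
        ≤ (n.factorial : ℝ)⁻¹ * ‖x‖ ^ (n + 2) := by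
          refine mul_le_mul ?_ (norm_pow_le' x (by positivity)) (norm_nonneg _) (by positivity)
          refine inv_anti₀ (by positivity) ?_
          exact_mod_cast Nat.factorial_le (by omega)
      _ = ‖x‖ ^ 2 * ((n.factorial : ℝ)⁻¹ * ‖x‖ ^ n) := by ring
  · rw [tsum_mul_left]
    refine mul_le_mul_of_nonneg_left ?_ (by positivity)
    rw [Real.exp_eq_exp_ℝ, exp_eq_tsum ℝ]
    exact le_of_eq (tsum_congr fun n => (smul_eq_mul _ _).symm)

lemma aux_pow_sub_pow (h1 : ‖(1 : 𝔸)‖ ≤ 1) {M : ℝ} (hM : 1 ≤ M) {x y : 𝔸} (hx : ‖x‖ ≤ M) (hy : ‖y‖ ≤ M) :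
    ∀ k : ℕ, ‖x ^ k - y ^ k‖ ≤ k * M ^ k * ‖x - y‖ := by
  intro k
  induction k with
  | zero => simp
  | succ k ih =>
    have hid : x ^ (k + 1) - y ^ (k + 1) = x ^ k * (x - y) + (x ^ k - y ^ k) * y := by
      noncomm_ring
    have hMk : (0:ℝ) ≤ M ^ k := by positivity
    have hd : (0:ℝ) ≤ ‖x - y‖ := norm_nonneg _
    have h1 : ‖x ^ k * (x - y)‖ ≤ M ^ k * ‖x - y‖ :=
      (norm_mul_le _ _).trans (mul_le_mul_of_nonneg_right
        ((aux_norm_pow_le h1 x k).trans (pow_le_pow_left₀ (norm_nonneg x) hx k)) hd)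
    have h2 : ‖(x ^ k - y ^ k) * y‖ ≤ (k * M ^ k * ‖x - y‖) * M :=
      (norm_mul_le _ _).trans (mul_le_mul ih hy (norm_nonneg _) (by positivity))
    rw [hid]
    refine (norm_add_le _ _).trans ?_
    have key : ((k:ℝ) + 1) * M ^ (k + 1) * ‖x - y‖ -
        (M ^ k * ‖x - y‖ + ((k:ℝ) * M ^ k * ‖x - y‖) * M) = M ^ k * ‖x - y‖ * (M - 1) := by
      ring
    push_cast
    linarith [mul_nonneg (mul_nonneg hMk hd) (sub_nonneg.2 hM)]
end aux

open scoped Matrix.Norms.L2Operator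

set_option maxHeartbeats 1600000 in
/-- Lie–Trotter product formula for complex matrices. -/
theorem lie_trotter (n : ℕ) (A B : Matrix (Fin n) (Fin n) ℂ) :
    Filter.Tendsto
      (fun k : ℕ =>
        (NormedSpace.exp ((k : ℂ)⁻¹ • A) * NormedSpace.exp ((k : ℂ)⁻¹ • B)) ^ k)
      Filter.atTop (nhds (NormedSpace.exp (A + B))) := by
  have h1 : ‖(1 : Matrix (Fin n) (Fin n) ℂ)‖ ≤ 1 := by
    rw [Matrix.cstar_norm_def, map_one]
    exact ContinuousLinearMap.norm_id_le
  set r : ℝ := ‖A‖ + ‖B‖ with hr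
  have hr0 : 0 ≤ r := by positivity
  set e : ℝ := Real.exp r with he
  have he1 : 1 ≤ e := Real.one_le_exp hr0
  set C : ℝ := 1 + 2 * r * e + 3 * e + r ^ 2 * e ^ 2 with hC
  have hC0 : 0 ≤ C := by positivity
  set D : ℝ := e * (r ^ 2 * C) with hD
  rw [← tendsto_sub_nhds_zero_iff]
  apply squeeze_zero_norm' (a := fun k : ℕ => D / k)
  · filter_upwards [Filter.eventually_ge_atTop 1] with k hk
    have hk0 : (0:ℝ) < k := by exact_mod_cast hk
    have hkc : (k:ℂ) ≠ 0 := by exact_mod_cast hk0.ne'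
    set a : Matrix (Fin n) (Fin n) ℂ := (k : ℂ)⁻¹ • A with hadef
    set b : Matrix (Fin n) (Fin n) ℂ := (k : ℂ)⁻¹ • B with hbdef
    set t : ℝ := r / k with ht
    have ht0 : 0 ≤ t := by positivity
    have htr : t ≤ r := div_le_self hr0 (by exact_mod_cast hk)
    have hna : ‖a‖ = ‖A‖ / k := by
      rw [hadef, norm_smul, norm_inv, Complex.norm_natCast, inv_mul_eq_div]
    have hnb : ‖b‖ = ‖B‖ / k := by
      rw [hbdef, norm_smul, norm_inv, Complex.norm_natCast, inv_mul_eq_div]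
    have hat : ‖a‖ ≤ t := by rw [hna, ht]; gcongr; simp [hr]
    have hbt : ‖b‖ ≤ t := by rw [hnb, ht]; gcongr; simp [hr]
    have habt : ‖a + b‖ ≤ t := by
      refine (norm_add_le _ _).trans ?_
      rw [hna, hnb, ht, hr]; rw [← add_div]
    -- S^k = exp (A + B)
    have hS : NormedSpace.exp (A + B) = (NormedSpace.exp (a + b)) ^ k := by
      rw [← Matrix.exp_nsmul, ← Nat.cast_smul_eq_nsmul ℂ, hadef, hbdef, ← smul_add,
        smul_smul, mul_inv_cancel₀ hkc, one_smul]
    -- remainder bounds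
    have hea : Real.exp ‖a‖ ≤ e := Real.exp_le_exp.2 (hat.trans htr)
    have heb : Real.exp ‖b‖ ≤ e := Real.exp_le_exp.2 (hbt.trans htr)
    have heab : Real.exp ‖a + b‖ ≤ e := Real.exp_le_exp.2 (habt.trans htr)
    set fa := NormedSpace.exp a - 1 - a with hfa
    set fb := NormedSpace.exp b - 1 - b with hfb
    set fs := NormedSpace.exp (a + b) - 1 - (a + b) with hfs
    have hfa2 : ‖fa‖ ≤ t ^ 2 * e :=
      (aux_norm_exp_sub_le a).trans
        (mul_le_mul (pow_le_pow_left₀ (norm_nonneg a) hat 2) hea (Real.exp_pos _).le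
          (by positivity))
    have hfb2 : ‖fb‖ ≤ t ^ 2 * e :=
      (aux_norm_exp_sub_le b).trans
        (mul_le_mul (pow_le_pow_left₀ (norm_nonneg b) hbt 2) heb (Real.exp_pos _).le
          (by positivity))
    have hfs2 : ‖fs‖ ≤ t ^ 2 * e :=
      (aux_norm_exp_sub_le (a + b)).trans
        (mul_le_mul (pow_le_pow_left₀ (norm_nonneg (a + b)) habt 2) heab (Real.exp_pos _).le
          (by positivity))
    -- expansion identity
    have hexp : NormedSpace.exp a * NormedSpace.exp b - NormedSpace.exp (a + b) =
        a * b + a * fb + fa * b + fa + fb + fa * fb - fs := by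
      have h1 : NormedSpace.exp a = 1 + a + fa := by rw [hfa]; abel
      have h2 : NormedSpace.exp b = 1 + b + fb := by rw [hfb]; abel
      have h3 : NormedSpace.exp (a + b) = 1 + (a + b) + fs := by rw [hfs]; abel
      rw [h1, h2, h3]
      noncomm_ring
    -- bound on the one-step difference
    have hstep : ‖NormedSpace.exp a * NormedSpace.exp b - NormedSpace.exp (a + b)‖ ≤
        t ^ 2 * C := by
      rw [hexp]
      have key : ∀ u1 u2 u3 u4 u5 u6 u7 : Matrix (Fin n) (Fin n) ℂ,
          ‖u1 + u2 + u3 + u4 + u5 + u6 - u7‖ ≤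
            ‖u1‖ + ‖u2‖ + ‖u3‖ + ‖u4‖ + ‖u5‖ + ‖u6‖ + ‖u7‖ := by
        intro u1 u2 u3 u4 u5 u6 u7
        refine (norm_sub_le _ _).trans (add_le_add_left ?_ _)
        refine (norm_add_le _ _).trans (add_le_add_left ?_ _)
        refine (norm_add_le _ _).trans (add_le_add_left ?_ _)
        refine (norm_add_le _ _).trans (add_le_add_left ?_ _)
        refine (norm_add_le _ _).trans (add_le_add_left ?_ _)
        exact norm_add_le _ _
      refine (key _ _ _ _ _ _ _).trans ?_
      have b1 : ‖a * b‖ ≤ t * t := (norm_mul_le _ _).trans (by gcongr)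
      have b2 : ‖a * fb‖ ≤ t * (t ^ 2 * e) := (norm_mul_le _ _).trans (by gcongr)
      have b3 : ‖fa * b‖ ≤ (t ^ 2 * e) * t := (norm_mul_le _ _).trans (by gcongr)
      have b7 : ‖fa * fb‖ ≤ (t ^ 2 * e) * (t ^ 2 * e) := (norm_mul_le _ _).trans (by gcongr)
      have hfinal : t * t + t * (t ^ 2 * e) + (t ^ 2 * e) * t + t ^ 2 * e + t ^ 2 * e +
          (t ^ 2 * e) * (t ^ 2 * e) + t ^ 2 * e ≤ t ^ 2 * C := by
        rw [hC]
        have e0 : (0:ℝ) ≤ e := zero_le_one.trans he1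
        nlinarith [mul_nonneg (mul_nonneg (mul_nonneg ht0 ht0) e0) (sub_nonneg.2 htr),
          mul_nonneg (mul_nonneg (mul_nonneg (mul_nonneg ht0 ht0) e0) e0)
            (mul_nonneg (sub_nonneg.2 htr) (add_nonneg hr0 ht0))]
      linarith [b1, b2, b3, b7, hfa2, hfb2, hfs2]
    -- norms of the two k-th roots
    set M := Real.exp t with hM
    have hM1 : 1 ≤ M := Real.one_le_exp ht0
    have hTM : ‖NormedSpace.exp a * NormedSpace.exp b‖ ≤ M := by
      refine (norm_mul_le _ _).trans ?_
      calc ‖NormedSpace.exp a‖ * ‖NormedSpace.exp b‖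
          ≤ Real.exp ‖a‖ * Real.exp ‖b‖ :=
            mul_le_mul (aux_norm_exp_le h1 a) (aux_norm_exp_le h1 b) (norm_nonneg _)
              (Real.exp_pos _).le
        _ = Real.exp (‖a‖ + ‖b‖) := (Real.exp_add _ _).symm
        _ ≤ M := by rw [hM]; apply Real.exp_le_exp.2; rw [hna, hnb, ht, hr, ← add_div]
    have hSM : ‖NormedSpace.exp (a + b)‖ ≤ M :=
      (aux_norm_exp_le h1 _).trans (Real.exp_le_exp.2 habt)
    have hMk : M ^ k ≤ e := by
      rw [hM, he, ← Real.exp_nat_mul]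
      apply Real.exp_le_exp.2
      rw [ht]
      rw [mul_div_cancel₀ _ hk0.ne']
    -- put everything together
    have hmain := aux_pow_sub_pow h1 hM1 hTM hSM k
    rw [hS]
    refine hmain.trans ?_
    calc (k:ℝ) * M ^ k * ‖NormedSpace.exp a * NormedSpace.exp b - NormedSpace.exp (a + b)‖
        ≤ (k:ℝ) * e * (t ^ 2 * C) := by
          gcongr
      _ = D / k := by rw [hD, ht]; field_simp
  · exact tendsto_const_div_atTop_nhds_zero_nat D
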